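/- Under the unique-optimum assumption, suppose 0 < δ < ∞ and δ ≤ δ̄_p. Then the primal δ-sublevel set equals the convex hull of n−m+1 points: X_δ = Conv({x*} ∪ {x^1, …, x^{n−m}}), where x^j := x* + (δ/s*_{m+j})·u^j for j = 1,…,n−m. -/

import Mathlib

open Matrix
open scoped BigOperators

noncomputable section

namespace LPPaper

/-- Euclidean norm of a finite real vector. -/
def enorm {k : ℕ} (v : Fin k → ℝ) : ℝ := Real.sqrt (∑ i, (v i) ^ 2)

/-- ℓ₁ norm of a finite real vector. -/
def l1 {k : ℕ} (v : Fin k → ℝ) : ℝ := ∑ i, |v i|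

/-- Spectral norm (operator 2-norm w.r.t. Euclidean norms) of a real matrix. -/
def specNorm {α β : Type*} [Fintype α] [Fintype β] [DecidableEq β] (M : Matrix α β ℝ) : ℝ :=
  ‖LinearMap.toContinuousLinearMap (Matrix.toEuclideanLin M)‖

variable {m n : ℕ}

/-- Embedding of basic indices (the first `m` coordinates). -/
def bIdx (hmn : m ≤ n) (i : Fin m) : Fin n := Fin.castLE hmn i

/-- Embedding of nonbasic indices (the last `n - m` coordinates). -/
def nIdx (hmn : m ≤ n) (j : Fin (n - m)) : Fin n := ⟨m + j.val, by have := j.isLt; omega⟩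

/-- The basis matrix `B`: the first `m` columns of `A`. -/
def Bmat (hmn : m ≤ n) (A : Matrix (Fin m) (Fin n) ℝ) : Matrix (Fin m) (Fin m) ℝ :=
  Matrix.of fun i j => A i (bIdx hmn j)

/-- The nonbasic matrix `N`: the last `n - m` columns of `A`. -/
def Nmat (hmn : m ≤ n) (A : Matrix (Fin m) (Fin n) ℝ) : Matrix (Fin m) (Fin (n - m)) ℝ :=
  Matrix.of fun i j => A i (nIdx hmn j)

/-- The simplex tableau `B⁻¹N` at the optimal basis. -/
def BN (hmn : m ≤ n) (A : Matrix (Fin m) (Fin n) ℝ) : Matrix (Fin m) (Fin (n - m)) ℝ :=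
  (Bmat hmn A)⁻¹ * Nmat hmn A

/-- `q := Aᵀ(AAᵀ)⁻¹ b`. -/
def qvec (A : Matrix (Fin m) (Fin n) ℝ) (b : Fin m → ℝ) : Fin n → ℝ :=
  Aᵀ *ᵥ ((A * Aᵀ)⁻¹ *ᵥ b)

/-- Primal feasibility: `Ax = b`, `x ≥ 0`. -/
def PrimalFeasible (A : Matrix (Fin m) (Fin n) ℝ) (b : Fin m → ℝ) (x : Fin n → ℝ) : Prop :=
  A *ᵥ x = b ∧ ∀ i, 0 ≤ x i

/-- Dual feasibility: `Aᵀy + s = c`, `s ≥ 0`. -/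
def DualFeasible (A : Matrix (Fin m) (Fin n) ℝ) (c : Fin n → ℝ) (y : Fin m → ℝ)
    (s : Fin n → ℝ) : Prop :=
  Aᵀ *ᵥ y + s = c ∧ ∀ i, 0 ≤ s i

/-- The unique-optimum assumption (Assumption 1 of the paper), with the optimal basis being
(after a permutation of the variables) the set of the first `m` indices: the rows of `A` are
linearly independent, `x*` is the unique primal optimal solution, `(y*, s*)` the unique dual
optimal solution, the basis matrix `B` is invertible, `x*ᵢ > 0` exactly for the first `m`
indices and `s*ᵢ > 0` exactly for the remaining indices. -/
structure UniqueOpt (hmn : m ≤ n) (A : Matrix (Fin m) (Fin n) ℝ) (b : Fin m → ℝ)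
    (c : Fin n → ℝ) (xstar : Fin n → ℝ) (ystar : Fin m → ℝ) (sstar : Fin n → ℝ) : Prop where
  rows_indep : LinearIndependent ℝ (fun i => A i)
  primal_feas : PrimalFeasible A b xstar
  primal_opt : ∀ x, PrimalFeasible A b x → c ⬝ᵥ xstar ≤ c ⬝ᵥ x
  primal_uniq : ∀ x, PrimalFeasible A b x → c ⬝ᵥ x = c ⬝ᵥ xstar → x = xstar
  dual_feas : DualFeasible A c ystar sstar
  dual_opt : ∀ y s, DualFeasible A c y s → b ⬝ᵥ y ≤ b ⬝ᵥ ystar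
  dual_uniq : ∀ y s, DualFeasible A c y s → b ⬝ᵥ y = b ⬝ᵥ ystar → y = ystar ∧ s = sstar
  basis_isUnit : IsUnit (Bmat hmn A).det
  xstar_supp : ∀ i : Fin n, 0 < xstar i ↔ (i : ℕ) < m
  sstar_supp : ∀ i : Fin n, 0 < sstar i ↔ m ≤ (i : ℕ)

/-- The `max` factor appearing in the geometric condition number `Φ`. -/
def PhiFactor (hmn : m ≤ n) (A : Matrix (Fin m) (Fin n) ℝ) (xstar sstar : Fin n → ℝ) : ℝ :=
  max (⨆ j : Fin (n - m),
        Real.sqrt ((∑ i, (BN hmn A i j) ^ 2) + 1) / sstar (nIdx hmn j))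
      (⨆ i : Fin m,
        Real.sqrt ((∑ j, (BN hmn A i j) ^ 2) + 1) / xstar (bIdx hmn i))

/-- The geometric condition number `Φ`. -/
def Phi (hmn : m ≤ n) (A : Matrix (Fin m) (Fin n) ℝ) (xstar sstar : Fin n → ℝ) : ℝ :=
  (l1 xstar + l1 sstar) * PhiFactor hmn A xstar sstar


/-- The primal `δ`-sublevel set `X_δ`. -/
def Xlev (A : Matrix (Fin m) (Fin n) ℝ) (b : Fin m → ℝ) (c : Fin n → ℝ)
    (xstar : Fin n → ℝ) (δ : ℝ) : Set (Fin n → ℝ) :=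
  {x | PrimalFeasible A b x ∧ c ⬝ᵥ x - c ⬝ᵥ xstar ≤ δ}

/-- The direction `u^j` of the `j`-th edge emanating from the optimal solution:
`u^j` restricted to the first `m` coordinates is `-B⁻¹N_{·,j}`, the `(m+j)`-th
coordinate is `1`, and all other coordinates are `0`. -/
def uvec (hmn : m ≤ n) (A : Matrix (Fin m) (Fin n) ℝ) (j : Fin (n - m)) : Fin n → ℝ :=
  fun i => if h : (i : ℕ) < m then -(BN hmn A ⟨i, h⟩ j)
    else if (i : ℕ) = m + (j : ℕ) then 1 else 0


/-! ### Auxiliary lemmas -/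

section Aux

variable {m n : ℕ}

@[simp] lemma bIdx_val (hmn : m ≤ n) (i : Fin m) : (bIdx hmn i : ℕ) = i := rfl
@[simp] lemma nIdx_val (hmn : m ≤ n) (j : Fin (n-m)) : (nIdx hmn j : ℕ) = m + j := rfl

lemma idx_cases (hmn : m ≤ n) (k : Fin n) :
    (∃ i : Fin m, k = bIdx hmn i) ∨ ∃ j : Fin (n-m), k = nIdx hmn j := by
  by_cases hk : (k : ℕ) < m
  · exact Or.inl ⟨⟨k, hk⟩, by ext; simp⟩
  · exact Or.inr ⟨⟨(k : ℕ) - m, by have := k.isLt; omega⟩, by ext; simp; omega⟩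

def sumEquiv (hmn : m ≤ n) : Fin m ⊕ Fin (n-m) ≃ Fin n :=
  finSumFinEquiv.trans (finCongr (by omega))

@[simp] lemma sumEquiv_inl (hmn : m ≤ n) (i : Fin m) :
    sumEquiv hmn (Sum.inl i) = bIdx hmn i := by
  ext; simp [sumEquiv, bIdx]

@[simp] lemma sumEquiv_inr (hmn : m ≤ n) (j : Fin (n-m)) :
    sumEquiv hmn (Sum.inr j) = nIdx hmn j := by
  ext; simp [sumEquiv, nIdx]

lemma sum_split (hmn : m ≤ n) (f : Fin n → ℝ) :
    ∑ k, f k = ∑ i, f (bIdx hmn i) + ∑ j, f (nIdx hmn j) := by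
  rw [← Equiv.sum_comp (sumEquiv hmn) f, Fintype.sum_sum_type]
  simp

variable (hmn : m ≤ n) (A : Matrix (Fin m) (Fin n) ℝ)

lemma uvec_bIdx (j : Fin (n-m)) (i : Fin m) :
    uvec hmn A j (bIdx hmn i) = -(BN hmn A i j) := by
  simp [uvec, bIdx]

lemma uvec_nIdx (j j' : Fin (n-m)) :
    uvec hmn A j (nIdx hmn j') = if j' = j then 1 else 0 := by
  simp only [uvec, nIdx]
  simp only [show ¬ (m + (j' : ℕ) < m) by omega, ↓reduceDIte]
  by_cases h : j' = j
  · simp [h]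
  · rw [if_neg h]; simp only [show ¬ (m + (j' : ℕ) = m + (j : ℕ)) by simp [Fin.ext_iff] at h; omega, ↓reduceIte]

lemma mulVec_split (v : Fin n → ℝ) (i : Fin m) :
    (A *ᵥ v) i = (Bmat hmn A *ᵥ fun i' => v (bIdx hmn i')) i
      + (Nmat hmn A *ᵥ fun j => v (nIdx hmn j)) i := by
  simp only [mulVec, dotProduct, Bmat, Nmat, Matrix.of_apply]
  exact sum_split hmn (fun k => A i k * v k)

lemma ker_basic (hB : IsUnit (Bmat hmn A).det) {w : Fin n → ℝ} (hw : A *ᵥ w = 0)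
    (i : Fin m) : w (bIdx hmn i) = -((BN hmn A *ᵥ fun j => w (nIdx hmn j)) i) := by
  have h1 : Bmat hmn A *ᵥ (fun i' => w (bIdx hmn i'))
      = -(Nmat hmn A *ᵥ fun j => w (nIdx hmn j)) := by
    funext i'
    have := mulVec_split hmn A w i'
    rw [hw] at this
    simp only [Pi.zero_apply] at this
    simp [Pi.neg_apply]; linarith
  have h2 : (fun i' => w (bIdx hmn i')) = -(BN hmn A *ᵥ fun j => w (nIdx hmn j)) := by
    have := congrArg (fun v => (Bmat hmn A)⁻¹ *ᵥ v) h1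
    simp only [mulVec_mulVec, Matrix.nonsing_inv_mul _ hB, Matrix.one_mulVec] at this
    rw [this]
    simp [BN, mulVec_neg, mulVec_mulVec]
  exact congrFun h2 i

lemma mulVec_uvec (hB : IsUnit (Bmat hmn A).det) (j : Fin (n-m)) :
    A *ᵥ uvec hmn A j = 0 := by
  funext i
  rw [mulVec_split hmn A (uvec hmn A j) i]
  have hb : (fun i' => uvec hmn A j (bIdx hmn i')) = fun i' => -(BN hmn A i' j) := by
    funext i'; exact uvec_bIdx hmn A j i'
  have hn : (fun j' => uvec hmn A j (nIdx hmn j')) = fun j' => if j' = j then 1 else 0 := by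
    funext j'; exact uvec_nIdx hmn A j j'
  rw [hb, hn]
  have h1 : (Bmat hmn A *ᵥ fun i' => -(BN hmn A i' j)) i = -(Nmat hmn A i j) := by
    have : (fun i' => -(BN hmn A i' j)) = -(fun i' => BN hmn A i' j) := by funext; simp
    rw [this, mulVec_neg]
    have h2 : (Bmat hmn A *ᵥ fun i' => BN hmn A i' j) = fun i' => Nmat hmn A i' j := by
      have : (fun i' => BN hmn A i' j) = (BN hmn A) *ᵥ (fun j' => if j' = j then 1 else 0) := by
        funext i'; simp [mulVec, dotProduct, mul_ite]
      rw [this, mulVec_mulVec, BN, ← Matrix.mul_assoc, Matrix.mul_nonsing_inv _ hB,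
        Matrix.one_mul]
      funext i'; simp [mulVec, dotProduct, mul_ite]
    rw [h2]; simp
  have h3 : (Nmat hmn A *ᵥ fun j' => if j' = j then (1:ℝ) else 0) i = Nmat hmn A i j := by
    simp [mulVec, dotProduct, mul_ite]
  rw [h1, h3]; simp

lemma ker_repr (hB : IsUnit (Bmat hmn A).det) {w : Fin n → ℝ} (hw : A *ᵥ w = 0)
    (k : Fin n) : w k = ∑ j, w (nIdx hmn j) * uvec hmn A j k := by
  rcases idx_cases hmn k with ⟨i, rfl⟩ | ⟨j0, rfl⟩
  · rw [ker_basic hmn A hB hw i]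
    simp only [mulVec, dotProduct]
    rw [← Finset.sum_neg_distrib]
    congr 1; funext j
    rw [uvec_bIdx]; ring
  · rw [Finset.sum_eq_single j0]
    · rw [uvec_nIdx]; simp
    · intro j _ hj; rw [uvec_nIdx, if_neg (fun h' => hj h'.symm)]; ring
    · intro h'; simp at h'

variable (b : Fin m → ℝ) (c : Fin n → ℝ) (xstar : Fin n → ℝ) (ystar : Fin m → ℝ)
  (sstar : Fin n → ℝ)

lemma xstar_nb (h : UniqueOpt hmn A b c xstar ystar sstar) (j : Fin (n-m)) :
    xstar (nIdx hmn j) = 0 := by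
  have h2 : ¬ 0 < xstar (nIdx hmn j) := fun hp => by
    have := (h.xstar_supp _).mp hp; simp at this
  have h3 := h.primal_feas.2 (nIdx hmn j)
  linarith

lemma sstar_b (h : UniqueOpt hmn A b c xstar ystar sstar) (i : Fin m) :
    sstar (bIdx hmn i) = 0 := by
  have h2 : ¬ 0 < sstar (bIdx hmn i) := fun hp => by
    have := (h.sstar_supp _).mp hp; simp at this; omega
  have h3 := h.dual_feas.2 (bIdx hmn i)
  linarith

lemma xstar_b_pos (h : UniqueOpt hmn A b c xstar ystar sstar) (i : Fin m) :
    0 < xstar (bIdx hmn i) :=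
  (h.xstar_supp _).mpr (by simp)

lemma sstar_nb_pos (h : UniqueOpt hmn A b c xstar ystar sstar) (j : Fin (n-m)) :
    0 < sstar (nIdx hmn j) :=
  (h.sstar_supp _).mpr (by simp)

lemma cost_diff (h : UniqueOpt hmn A b c xstar ystar sstar) {x : Fin n → ℝ}
    (hx : A *ᵥ x = b) :
    c ⬝ᵥ x - c ⬝ᵥ xstar = ∑ j, sstar (nIdx hmn j) * x (nIdx hmn j) := by
  have key : ∀ z : Fin n → ℝ, A *ᵥ z = b → c ⬝ᵥ z = ystar ⬝ᵥ b + sstar ⬝ᵥ z := by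
    intro z hz
    rw [← h.dual_feas.1, add_dotProduct, mulVec_transpose, ← dotProduct_mulVec, hz]
  have sx : ∀ z : Fin n → ℝ, sstar ⬝ᵥ z
      = ∑ i, sstar (bIdx hmn i) * z (bIdx hmn i)
        + ∑ j, sstar (nIdx hmn j) * z (nIdx hmn j) := fun z =>
    sum_split hmn (fun k => sstar k * z k)
  rw [key x hx, key xstar h.primal_feas.1, sx, sx]
  simp [sstar_b hmn A b c xstar ystar sstar h, xstar_nb hmn A b c xstar ystar sstar h]

lemma xlev_convex (δ : ℝ) : Convex ℝ (Xlev A b c xstar δ) := by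
  rintro x ⟨⟨hxA, hxp⟩, hxc⟩ y ⟨⟨hyA, hyp⟩, hyc⟩ a a' ha ha' haa
  refine ⟨⟨?_, ?_⟩, ?_⟩
  · rw [mulVec_add, mulVec_smul, mulVec_smul, hxA, hyA, ← add_smul, haa, one_smul]
  · intro i
    have := hxp i; have := hyp i
    simp only [Pi.add_apply, Pi.smul_apply, smul_eq_mul]
    nlinarith
  · simp only [dotProduct_add, dotProduct_smul, smul_eq_mul]
    have h1 := mul_le_mul_of_nonneg_left hxc ha
    have h2 := mul_le_mul_of_nonneg_left hyc ha'
    have h3 : (a + a') * (c ⬝ᵥ xstar) = c ⬝ᵥ xstar ∧ (a + a') * δ = δ := by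
      rw [haa, one_mul, one_mul]; exact ⟨rfl, rfl⟩
    have h4 := h3.1; have h5 := h3.2
    nlinarith [h4, h5, h1, h2]

end Aux


section Key

variable {m n : ℕ} (hmn : m ≤ n) (A : Matrix (Fin m) (Fin n) ℝ) (b : Fin m → ℝ)
  (c : Fin n → ℝ) (xstar : Fin n → ℝ) (ystar : Fin m → ℝ) (sstar : Fin n → ℝ)

lemma key_bound (h : UniqueOpt hmn A b c xstar ystar sstar) (δ : ℝ) (hδpos : 0 < δ)
    (hδbar : ∀ x ∈ Set.extremePoints ℝ {x | PrimalFeasible A b x}, x ≠ xstar →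
      δ ≤ c ⬝ᵥ x - c ⬝ᵥ xstar)
    (j : Fin (n-m)) (i : Fin m) :
    δ / sstar (nIdx hmn j) * BN hmn A i j ≤ xstar (bIdx hmn i) := by
  have hB := h.basis_isUnit
  have hs := sstar_nb_pos hmn A b c xstar ystar sstar h j
  by_cases hM : BN hmn A i j ≤ 0
  · have h1 : δ / sstar (nIdx hmn j) * BN hmn A i j ≤ 0 :=
      mul_nonpos_of_nonneg_of_nonpos (le_of_lt (div_pos hδpos hs)) hM
    linarith [xstar_b_pos hmn A b c xstar ystar sstar h i]
  push_neg at hM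
  set T : Finset (Fin m) := Finset.univ.filter (fun i' => 0 < BN hmn A i' j) with hT
  have hiT : i ∈ T := by simp [hT, hM]
  obtain ⟨i0, hi0T, hmin⟩ :=
    T.exists_min_image (fun i' => xstar (bIdx hmn i') / BN hmn A i' j) ⟨i, hiT⟩
  have hMi0 : 0 < BN hmn A i0 j := by simpa [hT] using hi0T
  set t0 : ℝ := xstar (bIdx hmn i0) / BN hmn A i0 j with ht0
  have ht0pos : 0 < t0 := div_pos (xstar_b_pos hmn A b c xstar ystar sstar h i0) hMi0
  set v : Fin n → ℝ := xstar + t0 • uvec hmn A j with hv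
  have hvb : ∀ i', v (bIdx hmn i') = xstar (bIdx hmn i') - t0 * BN hmn A i' j := by
    intro i'
    rw [hv]
    simp only [Pi.add_apply, Pi.smul_apply, smul_eq_mul]
    rw [uvec_bIdx hmn A j i']; ring
  have hvn : ∀ j', v (nIdx hmn j') = if j' = j then t0 else 0 := by
    intro j'
    rw [hv]
    simp only [Pi.add_apply, Pi.smul_apply, smul_eq_mul]
    rw [uvec_nIdx hmn A j j', xstar_nb hmn A b c xstar ystar sstar h j']
    split <;> simp
  have hvfeas : PrimalFeasible A b v := by
    constructor
    · rw [hv, mulVec_add, mulVec_smul, mulVec_uvec hmn A hB, h.primal_feas.1]; simp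
    · intro k
      rcases idx_cases hmn k with ⟨i', rfl⟩ | ⟨j', rfl⟩
      · rw [hvb i']
        by_cases hM' : 0 < BN hmn A i' j
        · have hT' : i' ∈ T := by simp [hT, hM']
          have h2 := hmin i' hT'
          rw [le_div_iff₀ hM'] at h2
          linarith
        · push_neg at hM'
          have h1 : 0 ≤ -(t0 * BN hmn A i' j) := by nlinarith
          have h2 := xstar_b_pos hmn A b c xstar ystar sstar h i'
          linarith
      · rw [hvn j']
        split
        · exact ht0pos.le
        · exact le_refl 0
  have hvb0 : v (bIdx hmn i0) = 0 := by
    rw [hvb i0, ht0, div_mul_cancel₀ _ hMi0.ne', sub_self]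
  have hvext : v ∈ Set.extremePoints ℝ {x | PrimalFeasible A b x} := by
    rw [mem_extremePoints]
    refine ⟨hvfeas, ?_⟩
    intro y hy z hz hseg
    obtain ⟨a, a', ha, ha', haa, heq⟩ := hseg
    have hzero : ∀ k, v k = 0 → y k = 0 ∧ z k = 0 := by
      intro k hk
      have h1 := congrFun heq k
      simp only [Pi.add_apply, Pi.smul_apply, smul_eq_mul] at h1
      rw [hk] at h1
      have hy0 := hy.2 k; have hz0 := hz.2 k
      constructor <;> nlinarith
    have hwker : A *ᵥ (y - z) = 0 := by
      rw [mulVec_sub, hy.1, hz.1, sub_self]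
    have hwn : ∀ j', j' ≠ j → (y - z) (nIdx hmn j') = 0 := by
      intro j' hj'
      have hv0 : v (nIdx hmn j') = 0 := by rw [hvn j', if_neg hj']
      obtain ⟨h1, h2⟩ := hzero _ hv0
      simp [h1, h2]
    have hwnj : (y - z) (nIdx hmn j) = 0 := by
      have hb0 := ker_basic hmn A hB hwker i0
      obtain ⟨h1, h2⟩ := hzero _ hvb0
      have hw0 : (y - z) (bIdx hmn i0) = 0 := by simp [h1, h2]
      have hsum : ∑ j', BN hmn A i0 j' * (y - z) (nIdx hmn j')
          = BN hmn A i0 j * (y - z) (nIdx hmn j) := by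
        refine Finset.sum_eq_single j (fun j' _ hj' => ?_) (fun hc => absurd (Finset.mem_univ j) hc)
        rw [hwn j' hj']; ring
      simp only [mulVec, dotProduct] at hb0
      rw [hsum, hw0] at hb0
      have h3 : BN hmn A i0 j * (y - z) (nIdx hmn j) = 0 := by linarith
      exact (mul_eq_zero.mp h3).resolve_left hMi0.ne'
    have hwall : ∀ j', (y - z) (nIdx hmn j') = 0 := by
      intro j'
      by_cases hj' : j' = j
      · rw [hj']; exact hwnj
      · exact hwn j' hj'
    have hyz : y = z := by
      funext k
      have h1 : (y - z) k = 0 := by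
        rcases idx_cases hmn k with ⟨i', rfl⟩ | ⟨j', rfl⟩
        · rw [ker_basic hmn A hB hwker i']
          simp only [mulVec, dotProduct]
          rw [Finset.sum_eq_zero (fun j' _ => by rw [hwall j']; ring)]
          simp
        · exact hwall j'
      have h2 : y k - z k = 0 := by simpa using h1
      linarith
    subst hyz
    have hyv : y = v := by rw [← heq, ← add_smul, haa, one_smul]
    exact ⟨hyv, hyv⟩
  have hvne : v ≠ xstar := by
    intro hc
    have h1 := congrFun hc (nIdx hmn j)
    rw [hvn j, if_pos rfl, xstar_nb hmn A b c xstar ystar sstar h j] at h1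
    linarith
  have hδv := hδbar v hvext hvne
  have hcost : c ⬝ᵥ v - c ⬝ᵥ xstar = sstar (nIdx hmn j) * t0 := by
    rw [cost_diff hmn A b c xstar ystar sstar h hvfeas.1]
    refine Finset.sum_eq_single j (fun j' _ hj' => ?_) (fun hc => absurd (Finset.mem_univ j) hc)
      |>.trans ?_
    · rw [hvn j', if_neg hj']; ring
    · rw [hvn j, if_pos rfl]
  rw [hcost] at hδv
  have h1 : δ / sstar (nIdx hmn j) ≤ t0 := by
    rw [div_le_iff₀ hs]; linarith
  have h2 : t0 * BN hmn A i j ≤ xstar (bIdx hmn i) := by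
    have := hmin i hiT
    rw [le_div_iff₀ hM] at this
    linarith
  nlinarith

end Key

/-- Lemma 4 of the paper. Under the unique-optimum assumption, if
`0 < δ ≤ δ̄_p` (where `δ̄_p` is the smallest nonzero objective error among extreme points
of the primal feasible set), then the primal `δ`-sublevel set is the convex hull of
`x*` and the `n-m` points `x^j := x* + (δ/s*_{m+j})·u^j`. -/
theorem sublevel_set_convexHull (m n : ℕ) (hmn : m ≤ n)
    (A : Matrix (Fin m) (Fin n) ℝ) (b : Fin m → ℝ) (c : Fin n → ℝ)
    (xstar : Fin n → ℝ) (ystar : Fin m → ℝ) (sstar : Fin n → ℝ)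
    (h : UniqueOpt hmn A b c xstar ystar sstar)
    (δ : ℝ) (hδpos : 0 < δ)
    -- `δ ≤ δ̄_p`: every extreme point of `F_p` other than `x*` has objective error at least `δ`
    (hδbar : ∀ x ∈ Set.extremePoints ℝ {x | PrimalFeasible A b x}, x ≠ xstar →
      δ ≤ c ⬝ᵥ x - c ⬝ᵥ xstar) :
    Xlev A b c xstar δ =
      convexHull ℝ ({xstar} ∪ Set.range fun j : Fin (n - m) =>
        xstar + (δ / sstar (nIdx hmn j)) • uvec hmn A j) := by
  have hB := h.basis_isUnit
  have hs : ∀ j, 0 < sstar (nIdx hmn j) := sstar_nb_pos hmn A b c xstar ystar sstar h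
  apply Set.Subset.antisymm
  · -- Xlev ⊆ convexHull
    intro x hx
    obtain ⟨⟨hxA, hxp⟩, hxc⟩ := hx
    have hxker : A *ᵥ (x - xstar) = 0 := by
      rw [mulVec_sub, hxA, h.primal_feas.1, sub_self]
    have hrepr : ∀ k, x k = xstar k + ∑ j, x (nIdx hmn j) * uvec hmn A j k := by
      intro k
      have h1 := ker_repr hmn A hB hxker k
      simp only [Pi.sub_apply] at h1
      have h2 : ∀ j : Fin (n-m), x (nIdx hmn j) - xstar (nIdx hmn j) = x (nIdx hmn j) := by
        intro j; rw [xstar_nb hmn A b c xstar ystar sstar h j]; ring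
      simp_rw [h2] at h1
      linarith
    have hcost := cost_diff hmn A b c xstar ystar sstar h hxA
    rw [hcost] at hxc
    set lam : Fin (n-m) → ℝ := fun j => x (nIdx hmn j) * sstar (nIdx hmn j) / δ with hlam
    have hlam0 : ∀ j, 0 ≤ lam j := fun j =>
      div_nonneg (mul_nonneg (hxp _) (hs j).le) hδpos.le
    have hlamsum : ∑ j, lam j ≤ 1 := by
      rw [hlam, ← Finset.sum_div, div_le_one hδpos]
      calc ∑ j, x (nIdx hmn j) * sstar (nIdx hmn j)
          = ∑ j, sstar (nIdx hmn j) * x (nIdx hmn j) :=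
            Finset.sum_congr rfl (fun j _ => by ring)
        _ ≤ δ := hxc
    have hxeq : x = (1 - ∑ j, lam j) • xstar
        + ∑ j, lam j • (xstar + (δ / sstar (nIdx hmn j)) • uvec hmn A j) := by
      funext k
      simp only [Pi.add_apply, Pi.smul_apply, smul_eq_mul, Finset.sum_apply]
      have hterm : ∀ j : Fin (n-m),
          lam j * (xstar k + δ / sstar (nIdx hmn j) * uvec hmn A j k)
          = lam j * xstar k + x (nIdx hmn j) * uvec hmn A j k := by
        intro j
        have h3 : lam j * (δ / sstar (nIdx hmn j)) = x (nIdx hmn j) := by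
          rw [hlam]
          field_simp
          rw [mul_div_assoc, div_self (hs j).ne', mul_one]
        calc lam j * (xstar k + δ / sstar (nIdx hmn j) * uvec hmn A j k)
            = lam j * xstar k
              + lam j * (δ / sstar (nIdx hmn j)) * uvec hmn A j k := by ring
          _ = lam j * xstar k + x (nIdx hmn j) * uvec hmn A j k := by rw [h3]
      rw [Finset.sum_congr rfl (fun j _ => hterm j), Finset.sum_add_distrib,
        ← Finset.sum_mul, hrepr k]
      ring
    have hconv := convex_convexHull ℝ ({xstar} ∪ Set.range fun j : Fin (n - m) =>
        xstar + (δ / sstar (nIdx hmn j)) • uvec hmn A j)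
    have hmem : ∀ o : Option (Fin (n-m)),
        (Option.elim o xstar
          (fun j => xstar + (δ / sstar (nIdx hmn j)) • uvec hmn A j))
        ∈ ({xstar} ∪ Set.range fun j : Fin (n - m) =>
            xstar + (δ / sstar (nIdx hmn j)) • uvec hmn A j) := by
      intro o
      cases o with
      | none => exact Set.mem_union_left _ rfl
      | some j => exact Set.mem_union_right _ ⟨j, rfl⟩
    have hw1 : ∑ o : Option (Fin (n-m)), Option.elim o (1 - ∑ j, lam j) lam = 1 := by
      rw [Fintype.sum_option]; simp
    have hkey := hconv.sum_mem (t := (Finset.univ : Finset (Option (Fin (n-m)))))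
      (w := fun o => Option.elim o (1 - ∑ j, lam j) lam)
      (z := fun o => Option.elim o xstar
        (fun j => xstar + (δ / sstar (nIdx hmn j)) • uvec hmn A j))
      (fun o _ => by cases o with
        | none => simpa using by linarith
        | some j => simpa using hlam0 j)
      hw1 (fun o _ => subset_convexHull ℝ _ (hmem o))
    rw [Fintype.sum_option] at hkey
    simp only [Option.elim_none, Option.elim_some] at hkey
    rw [hxeq]
    exact hkey
  · -- convexHull ⊆ Xlev
    apply convexHull_min _ (xlev_convex A b c xstar δ)
    rintro x (rfl | ⟨j, rfl⟩)
    · exact ⟨h.primal_feas, by simp [hδpos.le]⟩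
    · have hfeas : PrimalFeasible A b
          (xstar + (δ / sstar (nIdx hmn j)) • uvec hmn A j) := by
        constructor
        · rw [mulVec_add, mulVec_smul, mulVec_uvec hmn A hB, h.primal_feas.1]; simp
        · intro k
          rcases idx_cases hmn k with ⟨i, rfl⟩ | ⟨j', rfl⟩
          · simp only [Pi.add_apply, Pi.smul_apply, smul_eq_mul]
            rw [uvec_bIdx hmn A j i]
            have := key_bound hmn A b c xstar ystar sstar h δ hδpos hδbar j i
            linarith
          · simp only [Pi.add_apply, Pi.smul_apply, smul_eq_mul]
            rw [uvec_nIdx hmn A j j', xstar_nb hmn A b c xstar ystar sstar h j']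
            split
            · simpa using (div_pos hδpos (hs j)).le
            · simp
      refine ⟨hfeas, ?_⟩
      rw [cost_diff hmn A b c xstar ystar sstar h hfeas.1]
      have hterm : ∀ j' : Fin (n-m), sstar (nIdx hmn j')
          * (xstar + (δ / sstar (nIdx hmn j)) • uvec hmn A j) (nIdx hmn j')
          = if j' = j then δ else 0 := by
        intro j'
        simp only [Pi.add_apply, Pi.smul_apply, smul_eq_mul]
        rw [uvec_nIdx hmn A j j', xstar_nb hmn A b c xstar ystar sstar h j']
        split
        · rename_i hj'
          subst hj'
          rw [zero_add, mul_one, mul_comm, div_mul_cancel₀ _ (hs _).ne']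
        · ring
      rw [Finset.sum_congr rfl (fun j' _ => hterm j'), Finset.sum_ite_eq' Finset.univ j]
      simp


end LPPaper
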